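/- For every d ≥ 1 and every function C : ℕ^{d} → ℕ^{r}, defining f(x) = max over y ∈ {0,...,x}^{d} of the maximum coordinate of C(y), the strong adjacent Paris–Harrington principle SAPH^{d+1}_f implies the existence of x₁ < ... < x_{d+1} with C(x₁,...,x_d) ≤ C(x₂,...,x_{d+1}) coordinatewise. -/
import Mathlib
set_option maxHeartbeats 1000000


/-- `H` is homogeneous for the colouring `C` of `d`-element finite sets:
`C` is constant on the `d`-element subsets of `H`. -/
def HomogF (k d : ℕ) (C : Finset ℕ → Fin k) (H : Finset ℕ) : Prop :=
  ∃ c : Fin k, ∀ s : Finset ℕ, s ⊆ H → s.card = d → C s = c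

/-- Homogeneity for a (possibly infinite) set `H ⊆ ℕ`. -/
def HomogS (k d : ℕ) (C : Finset ℕ → Fin k) (H : Set ℕ) : Prop :=
  ∃ c : Fin k, ∀ s : Finset ℕ, ↑s ⊆ H → s.card = d → C s = c

/-- `F` is asymptotically stable: on every increasing chain of finite sets
the value of `F` eventually stabilises. -/
def AsympStable (F : Finset ℕ → ℕ) : Prop :=
  ∀ X : ℕ → Finset ℕ, (∀ i, X i ⊆ X (i + 1)) →
    ∃ i, ∀ j, i ≤ j → F (X j) = F (X i)

/-- The "pattern" colouring: for each coordinate `j` record whether the colour of the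
lower window is `≤` that of the upper window, together with the residue mod `d+2`
of the lower window's colour. -/
noncomputable def patP (d r : ℕ) (C : (Fin d → ℕ) → (Fin r → ℕ)) (s : Finset ℕ) :
    Fin r → Bool × Fin (d + 2) :=
  if h : s.card = d + 1 then
    fun j =>
      (decide (C (fun i => s.orderEmbOfFin h i.castSucc) j ≤
          C (fun i => s.orderEmbOfFin h i.succ) j),
        ⟨C (fun i => s.orderEmbOfFin h i.castSucc) j % (d + 2),
          Nat.mod_lt _ (Nat.succ_pos _)⟩)
  else fun _ => (true, ⟨0, Nat.succ_pos _⟩)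

lemma patP_image (d r : ℕ) (C : (Fin d → ℕ) → (Fin r → ℕ))
    (x : Fin (d + 1) → ℕ) (hx : StrictMono x) :
    patP d r C (Finset.image x Finset.univ) = fun j =>
      (decide (C (fun i => x i.castSucc) j ≤ C (fun i => x i.succ) j),
        ⟨C (fun i => x i.castSucc) j % (d + 2), Nat.mod_lt _ (Nat.succ_pos _)⟩) := by
  have hcard : (Finset.image x Finset.univ).card = d + 1 := by
    rw [Finset.card_image_of_injective _ hx.injective, Finset.card_univ, Fintype.card_fin]
  have he : x = ⇑((Finset.image x Finset.univ).orderEmbOfFin hcard) :=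
    Finset.orderEmbOfFin_unique hcard
      (fun i => Finset.mem_image_of_mem _ (Finset.mem_univ i)) hx
  unfold patP
  rw [dif_pos hcard]
  funext j
  simp [← he]

theorem saph_implies_adjacent_ramsey (d r : ℕ) (hd : 1 ≤ d)
    (C : (Fin d → ℕ) → (Fin r → ℕ))
    (f : ℕ → ℕ)
    (hf : ∀ x : ℕ, f x = Finset.sup (Finset.univ : Finset (Fin d → Fin (x + 1)))
      (fun y => Finset.sup Finset.univ (fun j => C (fun i => (y i : ℕ)) j)))
    (hSAPH : ∀ c k m : ℕ,
      ∃ R : ℕ, ∀ D : Finset ℕ → Fin (c + 1),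
        ∃ H : Finset ℕ, ↑H ⊆ Finset.Icc m R ∧ HomogF (c + 1) (d + 1) D H ∧
          k ≤ H.card ∧ f ((H.sort (· ≤ ·)).getD (k - 1) 0) ≤ H.card) :
    ∃ x : Fin (d + 1) → ℕ, StrictMono x ∧
      C (fun i => x i.castSucc) ≤ C (fun i => x i.succ) := by
  classical
  -- basic facts about f
  have f_bound : ∀ (y : Fin d → ℕ) (j : Fin r) (x : ℕ), (∀ i, y i ≤ x) → C y j ≤ f x := by
    intro y j x hy
    rw [hf]
    exact le_trans
      (b := Finset.sup Finset.univ
        (fun j' => C (fun i : Fin d =>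
          ((⟨y i, Nat.lt_succ_of_le (hy i)⟩ : Fin (x+1)) : ℕ)) j'))
      (Finset.le_sup (Finset.mem_univ j))
      (Finset.le_sup (f := fun z : Fin d → Fin (x+1) =>
          Finset.sup Finset.univ (fun j' => C (fun i => (z i : ℕ)) j'))
        (Finset.mem_univ (fun i : Fin d =>
          (⟨y i, Nat.lt_succ_of_le (hy i)⟩ : Fin (x+1)))))
  have f_mono : Monotone f := by
    intro a b hab
    rw [hf a]
    refine Finset.sup_le ?_
    intro z _
    refine Finset.sup_le ?_
    intro j _
    exact f_bound _ _ _ (fun i => le_trans (Nat.lt_succ_iff.mp (z i).2) hab)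
  -- the colour type and coding
  set P := (Fin r → Bool × Fin (d + 2)) with hP
  have hPc : 0 < Fintype.card P := Fintype.card_pos
  set c := Fintype.card P - 1 with hc
  have hc1 : c + 1 = Fintype.card P := Nat.succ_pred_eq_of_pos hPc
  obtain ⟨R, hR⟩ := hSAPH c (d + 4) 0
  set e := Fintype.equivFin P with he
  set D : Finset ℕ → Fin (c + 1) := fun s => Fin.cast hc1.symm (e (patP d r C s)) with hD
  obtain ⟨H, -, ⟨c0, hc0⟩, hk, hfb⟩ := hR D
  -- enumeration of H
  set N := H.card with hN
  have hNk : d + 4 ≤ N := hk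
  set a : Fin N ↪o ℕ := H.orderEmbOfFin rfl with ha
  set a' : ℕ → ℕ := fun n => if h : n < N then a ⟨n, h⟩ else 0 with ha'
  have ha'mono : ∀ m n : ℕ, m < n → n < N → a' m < a' n := by
    intro m n hmn hn
    have hm : m < N := lt_trans hmn hn
    simp only [ha', dif_pos hm, dif_pos hn]
    exact a.strictMono (by exact_mod_cast hmn)
  have ha'mem : ∀ n : ℕ, n < N → a' n ∈ H := by
    intro n hn
    simp only [ha', dif_pos hn]
    exact Finset.orderEmbOfFin_mem _ _ _
  -- all strictly monotone (d+1)-tuples in H give the same pattern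
  have hpat : ∀ x y : Fin (d + 1) → ℕ, StrictMono x → StrictMono y →
      (∀ t, x t ∈ H) → (∀ t, y t ∈ H) →
      patP d r C (Finset.image x Finset.univ) = patP d r C (Finset.image y Finset.univ) := by
    intro x y hx hy hxH hyH
    have key : ∀ z : Fin (d + 1) → ℕ, StrictMono z → (∀ t, z t ∈ H) →
        D (Finset.image z Finset.univ) = c0 := by
      intro z hz hzH
      refine hc0 _ ?_ ?_
      · intro u hu
        obtain ⟨t, -, rfl⟩ := Finset.mem_image.mp hu
        exact hzH t
      · rw [Finset.card_image_of_injective _ hz.injective, Finset.card_univ, Fintype.card_fin]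
    have h1 := (key x hx hxH).trans (key y hy hyH).symm
    have h2 : e (patP d r C (Finset.image x Finset.univ))
        = e (patP d r C (Finset.image y Finset.univ)) := by
      apply Fin.ext
      have := congrArg Fin.val h1
      simpa [hD] using this
    exact e.injective h2
  -- the base tuple
  have hx0lt : ∀ t : Fin (d + 1), (t : ℕ) < N := fun t => lt_of_lt_of_le t.2 (by omega)
  set x0 : Fin (d + 1) → ℕ := fun t => a' t with hx0
  have hx0mono : StrictMono x0 := by
    intro s t hst
    exact ha'mono s t (by exact_mod_cast hst) (hx0lt t)
  have hx0mem : ∀ t, x0 t ∈ H := fun t => ha'mem _ (hx0lt t)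
  set p : Fin r → Bool × Fin (d + 2) := patP d r C (Finset.image x0 Finset.univ) with hp
  by_cases hall : ∀ j, (p j).1 = true
  · refine ⟨x0, hx0mono, ?_⟩
    intro j
    have := congrFun (patP_image d r C x0 hx0mono) j
    rw [← hp] at this
    have hb : (p j).1 = decide (C (fun i => x0 i.castSucc) j ≤ C (fun i => x0 i.succ) j) := by
      rw [this]
    exact of_decide_eq_true (hb ▸ hall j)
  · exfalso
    push_neg at hall
    obtain ⟨j, hj⟩ := hall
    have hjf : (p j).1 = false := by
      cases hb : (p j).1
      · rfl
      · exact absurd hb hj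
    -- the window sequence
    set g : ℕ → ℕ := fun i => C (fun t : Fin d => a' (i + (t : ℕ))) j with hg
    have step : ∀ i : ℕ, i + (d + 1) ≤ N →
        g (i + 1) < g i ∧ g i % (d + 2) = ((p j).2 : ℕ) := by
      intro i hi
      set x : Fin (d + 1) → ℕ := fun t => a' (i + (t : ℕ)) with hx
      have hxmono : StrictMono x := by
        intro s t hst
        exact ha'mono _ _ (by omega) (by have := t.2; omega)
      have hxmem : ∀ t, x t ∈ H := by
        intro t; exact ha'mem _ (by have := t.2; omega)
      have hpq := hpat x x0 hxmono hx0mono hxmem hx0mem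
      have hcomp := (congrFun (patP_image d r C x hxmono) j).symm.trans
        (congrFun hpq j)
      -- hcomp : (decide (...), ⟨... % (d+2), _⟩) = p j
      have hw1 : (fun i' : Fin d => x i'.castSucc) = (fun t : Fin d => a' (i + (t : ℕ))) := by
        funext t; simp [hx]
      have hw2 : (fun i' : Fin d => x i'.succ) = (fun t : Fin d => a' ((i + 1) + (t : ℕ))) := by
        funext t
        have : i + ((t : ℕ) + 1) = (i + 1) + (t : ℕ) := by omega
        simp [hx, Fin.val_succ, this]
      rw [hw1, hw2] at hcomp
      constructor
      · have hb1 : decide (g i ≤ g (i + 1)) = (p j).1 := by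
          have := congrArg Prod.fst hcomp
          simpa [hg] using this
        rw [hjf] at hb1
        exact lt_of_not_ge (of_decide_eq_false hb1)
      · have := congrArg (fun q => (q.2 : ℕ)) hcomp
        simpa [hg] using this
    -- chained decrease with full steps of size d+2
    have chain : ∀ n : ℕ, n + (d + 1) ≤ N → g n + (d + 2) * n ≤ g 0 := by
      intro n
      induction n with
      | zero => intro _; simp
      | succ m ih =>
        intro hm
        have ih' := ih (by omega)
        obtain ⟨hlt, hmod1⟩ := step m (by omega)
        have hmod2 := (step (m + 1) hm).2
        have hmodeq : g (m + 1) % (d + 2) = g m % (d + 2) := by rw [hmod1, hmod2]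
        have hdvd : (d + 2) ∣ g m - g (m + 1) :=
          (Nat.modEq_iff_dvd' (le_of_lt hlt)).mp hmodeq
        obtain ⟨t, ht⟩ := hdvd
        have ht1 : 1 ≤ t := by
          rcases Nat.eq_zero_or_pos t with h0 | h1
          · exfalso; rw [h0, Nat.mul_zero] at ht; omega
          · exact h1
        have hm1 : (d + 2) * 1 ≤ (d + 2) * t := Nat.mul_le_mul le_rfl ht1
        have hstep : g (m + 1) + (d + 2) ≤ g m := by omega
        have hms : (d + 2) * (m + 1) = (d + 2) * m + (d + 2) := by ring
        omega
    -- upper bound for g 0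
    have hg0 : g 0 ≤ f (a' (d - 1)) := by
      refine f_bound _ _ _ ?_
      intro t
      have htd : (t : ℕ) ≤ d - 1 := by have := t.2; omega
      rcases lt_or_eq_of_le htd with h | h
      · exact le_of_lt (ha'mono _ _ (by omega) (by omega))
      · rw [Nat.zero_add, h]
    have hmono2 : f (a' (d - 1)) ≤ f (a' (d + 3)) :=
      f_mono (le_of_lt (ha'mono _ _ (by omega) (by omega)))
    have hsort : a' (d + 3) = (H.sort (· ≤ ·)).getD (d + 4 - 1) 0 := by
      have hlen : d + 3 < (H.sort (· ≤ ·)).length := by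
        rw [Finset.length_sort]; omega
      have : (H.sort (· ≤ ·)).getD (d + 4 - 1) 0 = (H.sort (· ≤ ·))[d + 3] := by
        have : d + 4 - 1 = d + 3 := by omega
        rw [this]
        exact List.getD_eq_getElem _ _ hlen
      rw [this]
      have hd3 : d + 3 < N := by omega
      simp only [ha', dif_pos hd3]
      rw [ha, Finset.orderEmbOfFin_apply]
      rfl
    have hfinal : f (a' (d + 3)) ≤ N := by
      rw [hsort]; exact hfb
    have hbig := chain (N - (d + 1)) (by omega)
    obtain ⟨u, hu⟩ : ∃ u, N = u + (d + 1) := ⟨N - (d + 1), by omega⟩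
    have huu : N - (d + 1) = u := by omega
    rw [huu] at hbig
    have h3 : 3 ≤ u := by omega
    have h9 : (d + 1) * 3 ≤ (d + 1) * u := Nat.mul_le_mul le_rfl h3
    have hexp : (d + 2) * u = (d + 1) * u + u := by ring
    omega
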